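/- Theorem 6 (time-averaged second–fourth-order correlation of a block-i.i.d. energy sequence): assume additionally that E[(B_k i)²] = Q for every i and E[B_k i · (B_k j)²] = ρ' for all i ≠ j. Then with the spliced energy sequence E_n = B_{n / M_s} (n mod M_s), for every integer delay τ > 0, (1/M_s) · ∑_{w=0}^{M_s−1} E[E_w · (E_{w+τ})²] equals (τ·P·Q + (M_s − τ)·ρ')/M_s if τ < M_s, and equals P·Q if τ ≥ M_s. -/

import Mathlib

open MeasureTheory ProbabilityTheory

/-- Theorem 6 (time-averaged second–fourth-order correlation of a block-i.i.d. energy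
sequence): with per-position mean `P`, second moment `Q`, off-diagonal correlations
`ρ = E[B_k i · B_k j]` and `ρ' = E[B_k i · (B_k j)²]`, splicing i.i.d. blocks of
length `M_s`, for every delay `τ > 0` the time-averaged second–fourth correlation
equals `(τ·P·Q + (M_s − τ)·ρ')/M_s` if `τ < M_s` and `P·Q` if `τ ≥ M_s`. -/
theorem timeAvg_second_fourth_corr
    {Ω : Type*} [MeasureSpace Ω] [IsProbabilityMeasure (ℙ : Measure Ω)]
    (Ms : ℕ) (hMs : 0 < Ms) (P Q ρ ρ' : ℝ)
    (B : ℕ → Ω → (Fin Ms → ℝ))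
    (hmeas : ∀ k, Measurable (B k))
    (hindep : iIndepFun B ℙ)
    (hident : ∀ k, IdentDistrib (B k) (B 0) ℙ ℙ)
    (hint1 : ∀ k (i : Fin Ms), Integrable (fun ω => B k ω i) ℙ)
    (hint2 : ∀ k k' (i j : Fin Ms), Integrable (fun ω => B k ω i * B k' ω j) ℙ)
    (hint3 : ∀ k k' k'' (i j l : Fin Ms),
      Integrable (fun ω => B k ω i * B k' ω j * B k'' ω l) ℙ)
    (hmean : ∀ k (i : Fin Ms), (∫ ω, B k ω i ∂ℙ) = P)
    (hsq : ∀ k (i : Fin Ms), (∫ ω, (B k ω i) ^ 2 ∂ℙ) = Q)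
    (hpair : ∀ k (i j : Fin Ms), i ≠ j → (∫ ω, B k ω i * B k ω j ∂ℙ) = ρ)
    (hpair' : ∀ k (i j : Fin Ms), i ≠ j → (∫ ω, B k ω i * (B k ω j) ^ 2 ∂ℙ) = ρ')
    (E : ℕ → Ω → ℝ)
    (hE : ∀ n ω, E n ω = B (n / Ms) ω ⟨n % Ms, Nat.mod_lt n hMs⟩)
    (τ : ℕ) (hτ : 0 < τ) :
    (1 / (Ms : ℝ)) * ∑ w ∈ Finset.range Ms, ∫ ω, E w ω * (E (w + τ) ω) ^ 2 ∂ℙ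
      = if τ < Ms then ((τ : ℝ) * P * Q + ((Ms : ℝ) - (τ : ℝ)) * ρ') / (Ms : ℝ)
        else P * Q := by
  have hMsR : (Ms : ℝ) ≠ 0 := Nat.cast_ne_zero.mpr hMs.ne'
  have key : ∀ w ∈ Finset.range Ms,
      (∫ ω, E w ω * (E (w + τ) ω) ^ 2 ∂ℙ) = if w + τ < Ms then ρ' else P * Q := by
    intro w hw
    rw [Finset.mem_range] at hw
    have hw1 : w / Ms = 0 := Nat.div_eq_of_lt hw
    have hw2 : w % Ms = w := Nat.mod_eq_of_lt hw
    by_cases hc : w + τ < Ms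
    · have h1 : (w + τ) / Ms = 0 := Nat.div_eq_of_lt hc
      have h2 : (w + τ) % Ms = w + τ := Nat.mod_eq_of_lt hc
      simp only [if_pos hc]
      have := hpair' 0 ⟨w % Ms, Nat.mod_lt w hMs⟩ ⟨(w + τ) % Ms, Nat.mod_lt (w + τ) hMs⟩
        (by simp only [ne_eq, Fin.mk.injEq, hw2, h2]; omega)
      rw [← this]
      congr 1
      ext ω
      rw [hE, hE, hw1, h1]
    · simp only [if_neg hc]
      set k := (w + τ) / Ms with hk
      have hk0 : k ≠ 0 := by
        intro h
        rw [hk, Nat.div_eq_zero_iff] at h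
        omega
      have hIF : IndepFun (B 0) (B k) ℙ := hindep.indepFun (Ne.symm hk0)
      set i : Fin Ms := ⟨w % Ms, Nat.mod_lt w hMs⟩
      set j : Fin Ms := ⟨(w + τ) % Ms, Nat.mod_lt (w + τ) hMs⟩
      have hIF2 : IndepFun (fun ω => B 0 ω i) (fun ω => (B k ω j) ^ 2) ℙ := by
        exact hIF.comp (measurable_pi_apply i) ((measurable_pi_apply j).pow_const 2)
      have hintsq : Integrable (fun ω => (B k ω j) ^ 2) ℙ := by
        have := hint2 k k j j
        simpa [pow_two] using this
      have := hIF2.integral_fun_mul_eq_mul_integral (hint1 0 i).aestronglyMeasurable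
        hintsq.aestronglyMeasurable
      calc (∫ ω, E w ω * (E (w + τ) ω) ^ 2 ∂ℙ)
          = ∫ ω, B 0 ω i * (B k ω j) ^ 2 ∂ℙ := by
            congr 1; ext ω; rw [hE, hE, hw1]
        _ = (∫ ω, B 0 ω i ∂ℙ) * ∫ ω, (B k ω j) ^ 2 ∂ℙ := this
        _ = P * Q := by rw [hmean, hsq]
  rw [Finset.sum_congr rfl key]
  by_cases hτMs : τ < Ms
  · simp only [if_pos hτMs]
    rw [Finset.sum_ite]
    have hfil : Finset.filter (fun w => w + τ < Ms) (Finset.range Ms)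
        = Finset.range (Ms - τ) := by
      ext x
      simp only [Finset.mem_filter, Finset.mem_range]
      omega
    have hcard2 : (Finset.filter (fun w => ¬(w + τ < Ms)) (Finset.range Ms)).card = τ := by
      have := Finset.card_filter_add_card_filter_not
        (s := Finset.range Ms) (p := fun w => w + τ < Ms)
      rw [hfil] at this
      simp only [Finset.card_range] at this
      omega
    rw [hfil]
    simp only [Finset.sum_const, Finset.card_range, hcard2, nsmul_eq_mul]
    have h1 : ((Ms - τ : ℕ) : ℝ) = (Ms : ℝ) - (τ : ℝ) := by
      rw [Nat.cast_sub hτMs.le]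
    rw [h1]
    field_simp
    ring
  · simp only [if_neg hτMs]
    have : ∀ w ∈ Finset.range Ms, (if w + τ < Ms then ρ' else P * Q) = P * Q := by
      intro w _
      rw [if_neg (by omega)]
    rw [Finset.sum_congr rfl this]
    simp only [Finset.sum_const, Finset.card_range, nsmul_eq_mul]
    field_simp
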